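/- Let γ be a positive integer, let S be a finite set, and let s : S → ℝ≥0 and u : S → ℝ≥0. Define F_γ = {Z ⊆ S : for every positive integer t, |{x ∈ Z : s(x) > 1/(t·γ)}| ≤ t}. Then for every subset X* ⊆ S with Σ_{x∈X*} s(x) ≤ 1, it holds that γ · max{Σ_{x∈Z} u(x) : Z ⊆ S, Z ∈ F_γ} ≥ Σ_{x∈X*} u(x). -/

import Mathlib

open scoped Classical

/-- Let `F_γ` be the family of subsets `Z` of `S` such that for every
`t ≥ 1` at most `t` elements of `Z` have size exceeding `1/(t·γ)`. Then every
knapsack-feasible set `X*` (total size at most `1`) has utility at most `γ` times the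
utility of some member of `F_γ`; in particular `γ · max{u(Z) : Z ∈ F_γ} ≥ u(X*)`. -/
theorem matroid_family_gamma_approx (γ : ℕ) (hγ : 0 < γ)
    (S : Type) [Fintype S] [DecidableEq S]
    (s u : S → ℝ) (hs : ∀ x, 0 ≤ s x) (hu : ∀ x, 0 ≤ u x)
    (Xstar : Finset S) (hX : ∑ x ∈ Xstar, s x ≤ 1) :
    ∃ Z : Finset S,
      (∀ t : ℕ, 0 < t → (Z.filter (fun x => 1 / ((t : ℝ) * (γ : ℝ)) < s x)).card ≤ t) ∧
      ∑ x ∈ Xstar, u x ≤ (γ : ℝ) * ∑ x ∈ Z, u x := by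
  classical
  set l : List S := Xstar.toList.mergeSort (fun a b => decide (s b ≤ s a)) with hl
  have hperm : l.Perm Xstar.toList := List.mergeSort_perm _ _
  have hnodup : l.Nodup := hperm.nodup_iff.mpr Xstar.nodup_toList
  have hinj : Function.Injective l.get := List.nodup_iff_injective_get.mp hnodup
  have hsorted : l.Pairwise (fun a b => s b ≤ s a) := by
    have h := List.pairwise_mergeSort (le := fun a b : S => decide (s b ≤ s a))
      (fun a b c h₁ h₂ => by
        simp only [decide_eq_true_eq] at *; exact le_trans h₂ h₁)
      (fun a b => by
        simp only [Bool.or_eq_true, decide_eq_true_eq]; exact le_total (s b) (s a))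
      Xstar.toList
    rw [← hl] at h
    exact h.imp (fun h => by simpa using h)
  -- sums over Xstar equal sums over Fin l.length
  have hsum : ∀ g : S → ℝ, ∑ x ∈ Xstar, g x = ∑ i : Fin l.length, g (l.get i) := by
    intro g
    have h1 : l.toFinset = Xstar := by
      ext x
      simp [List.mem_toFinset, hperm.mem_iff]
    rw [← h1, List.sum_toFinset g hnodup]
    conv_lhs => rw [← List.ofFn_get l]
    rw [List.map_ofFn, List.sum_ofFn]
    simp [List.ofFn_get]
  -- key size bound from sortedness and knapsack feasibility
  have keyA : ∀ t : ℕ, 0 < t → ∀ i : Fin l.length, t * γ ≤ i.val →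
      s (l.get i) ≤ 1 / ((t : ℝ) * (γ : ℝ)) := by
    intro t ht i hi
    by_contra hcon
    push_neg at hcon
    have htγ : (0 : ℝ) < (t : ℝ) * (γ : ℝ) := by positivity
    have hApos : 0 < s (l.get i) := lt_trans (by positivity) hcon
    set A : Finset (Fin l.length) := Finset.univ.filter (fun k => k.val ≤ i.val) with hA
    have hcard : t * γ + 1 ≤ A.card := by
      have : (Finset.range (t * γ + 1)).card ≤ A.card := by
        apply Finset.card_le_card_of_injOn (fun m => ⟨min m i.val, lt_of_le_of_lt (min_le_right _ _) i.isLt⟩)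
        · intro m hm
          simp only [hA, Finset.mem_coe, Finset.mem_filter, Finset.mem_univ, true_and]
          exact min_le_right _ _
        · intro a ha b hb hab
          simp only [Finset.coe_range, Set.mem_Iio] at ha hb
          have ha' : a ≤ i.val := le_trans (Nat.lt_succ_iff.mp ha) hi
          have hb' : b ≤ i.val := le_trans (Nat.lt_succ_iff.mp hb) hi
          have := congrArg Fin.val hab
          simpa [min_eq_left ha', min_eq_left hb'] using this
      simpa using this
    have hge : ∀ k ∈ A, s (l.get i) ≤ s (l.get k) := by
      intro k hk
      simp only [hA, Finset.mem_filter] at hk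
      rcases eq_or_lt_of_le hk.2 with h | h
      · rw [Fin.ext h]
      · exact List.pairwise_iff_get.mp hsorted k i h
    have h1 : (A.card : ℝ) * s (l.get i) ≤ ∑ k ∈ A, s (l.get k) := by
      have := Finset.card_nsmul_le_sum A (fun k => s (l.get k)) (s (l.get i)) hge
      simpa [nsmul_eq_mul] using this
    have h2 : ∑ k ∈ A, s (l.get k) ≤ ∑ k : Fin l.length, s (l.get k) := by
      apply Finset.sum_le_sum_of_subset_of_nonneg (Finset.subset_univ A)
      intro k _ _; exact hs _
    have h3 : ((t * γ + 1 : ℕ) : ℝ) * (1 / ((t : ℝ) * γ)) ≤ (A.card : ℝ) * s (l.get i) := by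
      apply mul_le_mul
      · exact_mod_cast hcard
      · exact le_of_lt hcon
      · positivity
      · positivity
    have h4 : (1 : ℝ) < ((t * γ + 1 : ℕ) : ℝ) * (1 / ((t : ℝ) * γ)) := by
      rw [mul_one_div, lt_div_iff₀ htγ, one_mul]
      push_cast
      linarith
    have := hsum s ▸ hX
    linarith
  -- partition into γ classes by index mod γ
  set P : ℕ → Finset S := fun j =>
    (Finset.univ.filter (fun k : Fin l.length => k.val % γ = j)).image l.get with hP
  -- total utility splits
  have hsplit : ∑ j ∈ Finset.range γ, ∑ x ∈ P j, u x = ∑ x ∈ Xstar, u x := by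
    rw [hsum u]
    rw [← Finset.sum_fiberwise_of_maps_to (t := Finset.range γ)
      (g := fun k : Fin l.length => k.val % γ)
      (fun k _ => Finset.mem_range.mpr (Nat.mod_lt _ hγ)) (fun k => u (l.get k))]
    apply Finset.sum_congr rfl
    intro j _
    rw [hP]
    rw [Finset.sum_image (fun a _ b _ h => hinj h)]
  -- pigeonhole
  have hγR : (0 : ℝ) < (γ : ℝ) := by exact_mod_cast hγ
  obtain ⟨j, hjmem, hj⟩ := Finset.exists_le_of_sum_le (f := fun _ : ℕ => (∑ x ∈ Xstar, u x) / γ)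
    (g := fun j => ∑ x ∈ P j, u x) (Finset.nonempty_range_iff.mpr hγ.ne')
    (by
      rw [Finset.sum_const, Finset.card_range, hsplit, nsmul_eq_mul]
      rw [mul_div_cancel₀ _ hγR.ne'])
  refine ⟨P j, ?_, ?_⟩
  · intro t ht
    rw [hP]
    rw [Finset.filter_image]
    set B := (Finset.univ.filter (fun k : Fin l.length => k.val % γ = j)).filter
      (fun a => 1 / ((t : ℝ) * (γ : ℝ)) < s (l.get a)) with hB
    calc (B.image l.get).card ≤ B.card := Finset.card_image_le
      _ ≤ (Finset.range t).card := by
          apply Finset.card_le_card_of_injOn (fun k => k.val / γ)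
          · intro k hk
            simp only [hB, Finset.mem_coe, Finset.mem_filter, Finset.mem_univ, true_and] at hk
            have hlt : k.val < t * γ := by
              by_contra hge
              push_neg at hge
              exact absurd hk.2 (not_lt.mpr (keyA t ht k hge))
            exact Finset.mem_range.mpr ((Nat.div_lt_iff_lt_mul hγ).mpr hlt)
          · intro a ha b hb hab
            simp only [hB, Finset.coe_filter, Set.mem_setOf_eq, Finset.mem_filter,
              Finset.mem_univ, true_and] at ha hb
            apply Fin.ext
            have h1 := Nat.div_add_mod a.val γ
            have h2 := Nat.div_add_mod b.val γ
            simp only at hab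
            rw [ha.1, hab] at h1
            rw [hb.1] at h2
            exact h1.symm.trans h2
      _ = t := Finset.card_range t
  · rw [div_le_iff₀ hγR, mul_comm] at hj
    exact hj
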